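/- arXiv:2508.18593 — 6 statements merged into one kernel-verified Lean document; each statement's English description precedes it below -/
import Mathlib

section
/- The star graph X_n = Cay(S_{n+1}, {τ_1,...,τ_n}) is a covering graph of the complete graph K_{n+1} via the map ξ ↦ ξ(n+1): for each vertex ξ, the map induces a bijection from the neighbors of ξ in X_n to the neighbors of ξ(n+1) in K_{n+1}. -/
open Equiv Equiv.Perm

/-- The star graph `X_n = Cay(S_{n+1}, {τ_1,…,τ_n})`, where `τ_i = (i, n+1)`. -/
def starGraph (n : ℕ) : SimpleGraph (Equiv.Perm (Fin (n + 1))) :=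
  SimpleGraph.fromRel (fun ξ η =>
    ∃ i : Fin n, η = ξ * Equiv.swap (Fin.castSucc i) (Fin.last n))

/-- The map `ξ ↦ ξ(n+1)` is a covering map from `X_n` to `K_{n+1}`: for each vertex `ξ`
it restricts to a bijection from the neighbors of `ξ` onto the neighbors of `ξ(n+1)`. -/
theorem starGraph_covers_complete (n : ℕ) (ξ : Equiv.Perm (Fin (n + 1))) :
    Set.BijOn (fun η : Equiv.Perm (Fin (n + 1)) => η (Fin.last n))
      ((starGraph n).neighborSet ξ)
      ((⊤ : SimpleGraph (Fin (n + 1))).neighborSet (ξ (Fin.last n))) := by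
  have hmem : ∀ η, η ∈ (starGraph n).neighborSet ξ ↔
      ∃ i : Fin n, η = ξ * Equiv.swap (Fin.castSucc i) (Fin.last n) := by
    intro η
    simp only [SimpleGraph.mem_neighborSet, starGraph, SimpleGraph.fromRel_adj]
    constructor
    · rintro ⟨hne, h | ⟨i, h⟩⟩
      · exact h
      · exact ⟨i, by rw [h, mul_assoc, Equiv.swap_mul_self, mul_one]⟩
    · rintro ⟨i, rfl⟩
      refine ⟨fun h => ?_, Or.inl ⟨i, rfl⟩⟩
      have hs : Equiv.swap (Fin.castSucc i) (Fin.last n) = 1 :=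
        mul_left_cancel (a := ξ) (by rw [mul_one, ← h])
      have hne : (Fin.castSucc i : Fin (n + 1)) ≠ Fin.last n :=
        Fin.ne_of_lt (Fin.castSucc_lt_last i)
      have : Equiv.swap (Fin.castSucc i) (Fin.last n) (Fin.castSucc i) =
          (1 : Equiv.Perm (Fin (n + 1))) (Fin.castSucc i) := by rw [hs]
      simp [Equiv.swap_apply_left] at this
      exact hne this.symm
  have hne : ∀ i : Fin n, (Fin.castSucc i : Fin (n + 1)) ≠ Fin.last n :=
    fun i => Fin.ne_of_lt (Fin.castSucc_lt_last i)
  refine ⟨?_, ?_, ?_⟩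
  · intro η hη
    obtain ⟨i, rfl⟩ := (hmem η).1 hη
    simp only [SimpleGraph.mem_neighborSet, SimpleGraph.top_adj, Equiv.Perm.mul_apply,
      Equiv.swap_apply_right]
    exact fun h => hne i (ξ.injective h.symm)
  · intro η₁ h₁ η₂ h₂ h
    obtain ⟨i, rfl⟩ := (hmem η₁).1 h₁
    obtain ⟨j, rfl⟩ := (hmem η₂).1 h₂
    simp only [Equiv.Perm.mul_apply, Equiv.swap_apply_right] at h
    have : (Fin.castSucc i : Fin (n + 1)) = Fin.castSucc j := ξ.injective h
    rw [Fin.castSucc_inj.1 this]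
  · intro y hy
    simp only [SimpleGraph.mem_neighborSet, SimpleGraph.top_adj] at hy
    have hx : ξ⁻¹ y ≠ Fin.last n := by
      intro h
      apply hy
      rw [← h]
      simp
    obtain ⟨i, hi⟩ := Fin.exists_castSucc_eq.2 hx
    refine ⟨ξ * Equiv.swap (Fin.castSucc i) (Fin.last n), (hmem _).2 ⟨i, rfl⟩, ?_⟩
    simp [Equiv.swap_apply_right, hi]
end

section
/- The quotient of the star graph X_3 = Cay(S_4, {(1,4),(2,4),(3,4)}) by the right action of the subgroup generated by the 3-cycle (1,2,3) is isomorphic to the cube graph Q_3 (the hypercube graph of dimension 3). -/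
open Equiv Equiv.Perm

/-- The star graph `X_3 = Cay(S_4, {(1,4),(2,4),(3,4)})`. -/
def starGraph3 : SimpleGraph (Equiv.Perm (Fin 4)) :=
  SimpleGraph.fromRel (fun ξ η =>
    ∃ i : Fin 3, η = ξ * Equiv.swap (Fin.castSucc i) (Fin.last 3))

/-- The quotient of `X_3` by the right action of a subgroup `H ≤ S_4`: the vertices are
the orbits (i.e. the left cosets `ξH`), and two orbits are adjacent iff they are distinct
and some representatives are adjacent in `X_3`. -/
def starQuotient (H : Subgroup (Equiv.Perm (Fin 4))) :
    SimpleGraph (Equiv.Perm (Fin 4) ⧸ H) :=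
  SimpleGraph.fromRel (fun a b =>
    ∃ ξ η : Equiv.Perm (Fin 4),
      (ξ : Equiv.Perm (Fin 4) ⧸ H) = a ∧ (η : Equiv.Perm (Fin 4) ⧸ H) = b ∧
      starGraph3.Adj ξ η)

/-- The cube graph `Q_3`: vertices are `{0,1}^3`, two vertices adjacent iff they differ
in exactly one coordinate. -/
def cubeGraph : SimpleGraph (Fin 3 → Bool) :=
  SimpleGraph.fromRel (fun x y =>
    (Finset.univ.filter fun i : Fin 3 => x i ≠ y i).card = 1)

namespace SQA

def c : Perm (Fin 4) := Equiv.swap (0 : Fin 4) 1 * Equiv.swap (1 : Fin 4) 2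
abbrev H : Subgroup (Perm (Fin 4)) := Subgroup.zpowers c
def e : Fin 4 → Fin 3 → Bool :=
  ![![false,false,false], ![true,true,false], ![true,false,true], ![false,true,true]]
def F (ξ : Perm (Fin 4)) : Fin 3 → Bool :=
  if Perm.sign ξ = 1 then e (ξ 3) else fun i => !(e (ξ 3) i)

lemma ham_bool_symm : ∀ x y : Fin 3 → Bool,
    (Finset.univ.filter fun i => x i ≠ y i).card
      = (Finset.univ.filter fun i => y i ≠ x i).card := by decide

lemma ham_comp : ∀ v w : Fin 4, v ≠ w →
    (Finset.univ.filter fun j : Fin 3 => e v j ≠ !(e w j)).card = 1 := by decide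
lemma ham_comp' : ∀ v w : Fin 4, v ≠ w →
    (Finset.univ.filter fun j : Fin 3 => (!(e v j)) ≠ e w j).card = 1 := by decide
lemma ham_same : ∀ v w : Fin 4,
    (Finset.univ.filter fun j : Fin 3 => e v j ≠ e w j).card ≠ 1 := by decide
lemma ham_same' : ∀ v w : Fin 4,
    (Finset.univ.filter fun j : Fin 3 => (!(e v j)) ≠ !(e w j)).card ≠ 1 := by decide
lemma ham_selfcomp : ∀ v : Fin 4,
    (Finset.univ.filter fun j : Fin 3 => e v j ≠ !(e v j)).card ≠ 1 := by decide
lemma ham_selfcomp' : ∀ v : Fin 4,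
    (Finset.univ.filter fun j : Fin 3 => (!(e v j)) ≠ e v j).card ≠ 1 := by decide

lemma cube_adj {x y : Fin 3 → Bool} :
    cubeGraph.Adj x y ↔ (Finset.univ.filter fun i => x i ≠ y i).card = 1 := by
  rw [cubeGraph, SimpleGraph.fromRel_adj]
  constructor
  · rintro ⟨hne, h | h⟩
    · exact h
    · rw [ham_bool_symm]; exact h
  · intro h
    refine ⟨?_, Or.inl h⟩
    rintro rfl
    simp at h

lemma F_swap (ξ : Perm (Fin 4)) (i : Fin 3) :
    (Finset.univ.filter fun j =>
      F ξ j ≠ F (ξ * Equiv.swap (Fin.castSucc i) (Fin.last 3)) j).card = 1 := by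
  set η := ξ * Equiv.swap (Fin.castSucc i) (Fin.last 3) with hηdef
  have hne34 : Fin.castSucc i ≠ Fin.last 3 := (Fin.castSucc_lt_last i).ne
  have h3 : η 3 = ξ (Fin.castSucc i) := by
    rw [hηdef, Equiv.Perm.mul_apply]
    have : (3 : Fin 4) = Fin.last 3 := rfl
    rw [this, Equiv.swap_apply_right]
  have hvw : ξ 3 ≠ ξ (Fin.castSucc i) := by
    intro hh
    exact hne34 (ξ.injective hh).symm
  have hsη : Perm.sign η = Perm.sign ξ * (-1) := by
    rw [hηdef, map_mul, Equiv.Perm.sign_swap hne34]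
  rcases Int.units_eq_one_or (Perm.sign ξ) with hξ | hξ
  · have hsη' : Perm.sign η = -1 := by rw [hsη, hξ]; decide
    simp only [F, hξ, hsη', reduceIte, h3]
    exact ham_comp _ _ hvw
  · have hsη' : Perm.sign η = 1 := by rw [hsη, hξ]; decide
    simp only [F, hξ, hsη', reduceIte, h3]
    exact ham_comp' _ _ hvw

end SQA
-- continuation, appended after aux2 contents for testing
namespace SQA

lemma key : ∀ g : Perm (Fin 4), g 3 ≠ 3 → Perm.sign g = -1 →
    ∃ i k : Fin 3, g * c ^ (k : ℕ) = Equiv.swap (Fin.castSucc i) (Fin.last 3) := by decide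

lemma mem_H_prop {h : Perm (Fin 4)} (hh : h ∈ H) : h 3 = 3 ∧ Perm.sign h = 1 := by
  obtain ⟨k, rfl⟩ := hh
  refine ⟨Equiv.Perm.zpow_apply_eq_self_of_apply_eq_self (by decide) k, ?_⟩
  rw [map_zpow]
  have : Perm.sign c = 1 := by decide
  rw [this, one_zpow]

lemma F_const {ξ η : Perm (Fin 4)} (hmem : ξ⁻¹ * η ∈ H) : F ξ = F η := by
  obtain ⟨h3, hs⟩ := mem_H_prop hmem
  have hη : η = ξ * (ξ⁻¹ * η) := by group
  have h1 : η 3 = ξ 3 := by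
    conv_lhs => rw [hη]
    rw [Equiv.Perm.mul_apply, h3]
  have h2 : Perm.sign η = Perm.sign ξ := by
    conv_lhs => rw [hη]
    rw [map_mul, hs, mul_one]
  simp [F, h1, h2]

lemma rel_card {ξ η ξ' η' : Perm (Fin 4)}
    (h1 : (ξ' : Perm (Fin 4) ⧸ H) = (ξ : Perm (Fin 4) ⧸ H))
    (h2 : (η' : Perm (Fin 4) ⧸ H) = (η : Perm (Fin 4) ⧸ H))
    (hadj : starGraph3.Adj ξ' η') :
    (Finset.univ.filter fun j => F ξ j ≠ F η j).card = 1 := by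
  have e1 : F ξ = F ξ' := F_const (QuotientGroup.eq.mp h1.symm)
  have e2 : F η = F η' := F_const (QuotientGroup.eq.mp h2.symm)
  rw [e1, e2]
  rw [starGraph3, SimpleGraph.fromRel_adj] at hadj
  obtain ⟨hne, ⟨i, rfl⟩ | ⟨i, rfl⟩⟩ := hadj
  · exact F_swap ξ' i
  · rw [ham_bool_symm]
    exact F_swap η' i

lemma card_to_adj {ξ η : Perm (Fin 4)}
    (h : (Finset.univ.filter fun j => F ξ j ≠ F η j).card = 1) :
    (starQuotient H).Adj (ξ : Perm (Fin 4) ⧸ H) (η : Perm (Fin 4) ⧸ H) := by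
  have hFne : F ξ ≠ F η := by
    intro he
    rw [he] at h
    simp at h
  -- signs differ
  have hsg : Perm.sign (ξ⁻¹ * η) = -1 ∧ ξ 3 ≠ η 3 := by
    rcases Int.units_eq_one_or (Perm.sign ξ) with hξ | hξ <;>
      rcases Int.units_eq_one_or (Perm.sign η) with hη | hη
    · exfalso; simp only [F, hξ, hη, reduceIte] at h; exact ham_same _ _ h
    · refine ⟨by rw [map_mul, map_inv, hξ, hη]; decide, fun h3 => ?_⟩
      simp only [F, hξ, hη, reduceIte, h3] at h
      exact ham_selfcomp _ h
    · refine ⟨by rw [map_mul, map_inv, hξ, hη]; decide, fun h3 => ?_⟩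
      simp only [F, hξ, hη, reduceIte, h3] at h
      exact ham_selfcomp' _ h
    · exfalso; simp only [F, hξ, hη, reduceIte] at h; exact ham_same' _ _ h
  have hg3 : (ξ⁻¹ * η) 3 ≠ 3 := by
    intro hh
    apply hsg.2
    have := congrArg ξ hh
    rw [Equiv.Perm.mul_apply, ← Equiv.Perm.mul_apply ξ ξ⁻¹, mul_inv_cancel, Equiv.Perm.one_apply] at this
    exact this.symm
  obtain ⟨i, k, hk⟩ := key _ hg3 hsg.1
  have hη' : η * c ^ (k : ℕ) = ξ * Equiv.swap (Fin.castSucc i) (Fin.last 3) := by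
    rw [← hk]; group
  have hclass : ((η * c ^ (k : ℕ) : Perm (Fin 4)) : Perm (Fin 4) ⧸ H)
      = (η : Perm (Fin 4) ⧸ H) := by
    apply (QuotientGroup.eq).mpr
    have : (η * c ^ (k : ℕ))⁻¹ * η = (c ^ (k : ℕ))⁻¹ := by group
    rw [this]
    exact inv_mem (Subgroup.pow_mem _ (Subgroup.mem_zpowers c) _)
  have hstar : starGraph3.Adj ξ (η * c ^ (k : ℕ)) := by
    rw [starGraph3, SimpleGraph.fromRel_adj]
    refine ⟨?_, Or.inl ⟨i, hη'⟩⟩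
    intro hh
    rw [hη'] at hh
    have : Equiv.swap (Fin.castSucc i) (Fin.last 3) = 1 := by
      exact mul_left_cancel (a := ξ) (by rw [← hh, mul_one])
    exact (Fin.castSucc_lt_last i).ne (Equiv.swap_eq_one_iff.mp this)
  have hqne : (ξ : Perm (Fin 4) ⧸ H) ≠ (η : Perm (Fin 4) ⧸ H) := by
    intro hq
    exact hFne (F_const (QuotientGroup.eq.mp hq))
  rw [starQuotient, SimpleGraph.fromRel_adj]
  exact ⟨hqne, Or.inl ⟨ξ, η * c ^ (k : ℕ), rfl, hclass, hstar⟩⟩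

lemma adj_iff (ξ η : Perm (Fin 4)) :
    cubeGraph.Adj (F ξ) (F η) ↔
      (starQuotient H).Adj (ξ : Perm (Fin 4) ⧸ H) (η : Perm (Fin 4) ⧸ H) := by
  rw [cube_adj]
  constructor
  · exact card_to_adj
  · intro h
    rw [starQuotient, SimpleGraph.fromRel_adj] at h
    obtain ⟨hne, ⟨ξ', η', h1, h2, hadj⟩ | ⟨ξ', η', h1, h2, hadj⟩⟩ := h
    · exact rel_card h1 h2 hadj
    · rw [ham_bool_symm]
      exact rel_card h1 h2 hadj

end SQA
namespace SQA

lemma e_stuff : ∀ v w : Fin 4, (e v = e w → v = w) ∧ e v ≠ (fun i => !(e w i)) := by decide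

lemma classify : ∀ g : Perm (Fin 4), g 3 = 3 → Perm.sign g = 1 →
    (g = 1 ∨ g = c ∨ g = c * c) := by decide

lemma F_inj {ξ η : Perm (Fin 4)} (hF : F ξ = F η) : ξ⁻¹ * η ∈ H := by
  have hsign : Perm.sign ξ = Perm.sign η ∧ ξ 3 = η 3 := by
    rcases Int.units_eq_one_or (Perm.sign ξ) with hξ | hξ <;>
      rcases Int.units_eq_one_or (Perm.sign η) with hη | hη <;>
      simp only [F, hξ, hη, reduceIte] at hF
    · exact ⟨hξ.trans hη.symm, (e_stuff _ _).1 hF⟩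
    · exact absurd hF (e_stuff _ _).2
    · exact absurd hF.symm (e_stuff _ _).2
    · refine ⟨hξ.trans hη.symm, (e_stuff _ _).1 (funext fun i => ?_)⟩
      have := congrFun hF i
      simpa using this
  have h3 : (ξ⁻¹ * η) 3 = 3 := by
    rw [Equiv.Perm.mul_apply, ← hsign.2, ← Equiv.Perm.mul_apply ξ⁻¹ ξ, inv_mul_cancel, Equiv.Perm.one_apply]
  have hs : Perm.sign (ξ⁻¹ * η) = 1 := by
    rw [map_mul, map_inv, hsign.1]
    simp
  rcases classify _ h3 hs with h | h | h <;> rw [h]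
  · exact one_mem _
  · exact Subgroup.mem_zpowers c
  · exact mul_mem (Subgroup.mem_zpowers c) (Subgroup.mem_zpowers c)

lemma F_surj : ∀ b : Fin 3 → Bool, ∃ ξ : Perm (Fin 4), F ξ = b := by decide

def Fbar : (Perm (Fin 4) ⧸ H) → Fin 3 → Bool :=
  fun q => Quotient.liftOn' q F
    (fun _ _ hab => F_const (QuotientGroup.leftRel_apply.mp hab))

theorem main : Nonempty (starQuotient H ≃g cubeGraph) := by
  have hinj : Function.Injective Fbar := fun a b =>
    Quotient.inductionOn₂' a b (fun ξ η h => QuotientGroup.eq.mpr (F_inj h))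
  have hsur : Function.Surjective Fbar := fun b => by
    obtain ⟨ξ, hξ⟩ := F_surj b
    exact ⟨(ξ : Perm (Fin 4) ⧸ H), hξ⟩
  refine ⟨{ toEquiv := Equiv.ofBijective Fbar ⟨hinj, hsur⟩,
            map_rel_iff' := @fun a b => ?_ }⟩
  exact Quotient.inductionOn₂' a b (fun ξ η => adj_iff ξ η)

end SQA

/-- The quotient of the star graph `X_3` by the right action of `⟨(1,2,3)⟩` is isomorphic
to the cube graph `Q_3`. Here `(1,2,3)` is the 3-cycle `c` with `c 0 = 1, c 1 = 2, c 2 = 0`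
(0-indexed). -/
theorem starQuotient_three_cycle_iso_cube :
    Nonempty
      (starQuotient (Subgroup.zpowers
          (Equiv.swap (0 : Fin 4) 1 * Equiv.swap (1 : Fin 4) 2)) ≃g cubeGraph) :=
  SQA.main
end

section
/- The quotient of the star graph X_3 = Cay(S_4, {(1,4),(2,4),(3,4)}) by the right action of the subgroup generated by the transposition (1,2) is isomorphic to the truncated tetrahedron graph (the 3-regular graph on 12 vertices consisting of four triangles pairwise joined by single edges according to the tetrahedron's structure). -/
open Equiv Equiv.Perm

/-- The truncated tetrahedron graph: the 3-regular graph on the 12 ordered pairs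
`(i,j)`, `i ≠ j`, of vertices of the tetrahedron, where each original vertex `i` yields
the triangle `{(i,j) : j ≠ i}`, and the triangles at `i` and `j` are joined by the single
edge `(i,j) — (j,i)`. -/
def truncatedTetrahedron : SimpleGraph {p : Fin 4 × Fin 4 // p.1 ≠ p.2} :=
  SimpleGraph.fromRel (fun p q =>
    ((p : Fin 4 × Fin 4).1 = (q : Fin 4 × Fin 4).1 ∧
      (p : Fin 4 × Fin 4).2 ≠ (q : Fin 4 × Fin 4).2) ∨
    ((p : Fin 4 × Fin 4).1 = (q : Fin 4 × Fin 4).2 ∧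
      (p : Fin 4 × Fin 4).2 = (q : Fin 4 × Fin 4).1))

namespace StarQuotAux

abbrev s : Equiv.Perm (Fin 4) := Equiv.swap 0 1
abbrev H : Subgroup (Equiv.Perm (Fin 4)) := Subgroup.zpowers s
abbrev V := {p : Fin 4 × Fin 4 // p.1 ≠ p.2}

/-- the defining relation of the truncated tetrahedron -/
def R (p q : V) : Prop :=
  ((p : Fin 4 × Fin 4).1 = (q : Fin 4 × Fin 4).1 ∧
    (p : Fin 4 × Fin 4).2 ≠ (q : Fin 4 × Fin 4).2) ∨
  ((p : Fin 4 × Fin 4).1 = (q : Fin 4 × Fin 4).2 ∧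
    (p : Fin 4 × Fin 4).2 = (q : Fin 4 × Fin 4).1)

lemma tt_adj_iff (p q : V) :
    truncatedTetrahedron.Adj p q ↔ p ≠ q ∧ (R p q ∨ R q p) := by
  simp only [truncatedTetrahedron, SimpleGraph.fromRel_adj, R]

lemma sg_adj_iff (ξ η : Equiv.Perm (Fin 4)) :
    starGraph3.Adj ξ η ↔ ξ ≠ η ∧
      ((∃ i : Fin 3, η = ξ * Equiv.swap (Fin.castSucc i) (Fin.last 3)) ∨
       (∃ i : Fin 3, ξ = η * Equiv.swap (Fin.castSucc i) (Fin.last 3))) := by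
  simp only [starGraph3, SimpleGraph.fromRel_adj]

lemma sq_adj_iff (a b : Equiv.Perm (Fin 4) ⧸ H) :
    (starQuotient H).Adj a b ↔ a ≠ b ∧
      ((∃ ξ η : Equiv.Perm (Fin 4), (ξ : Equiv.Perm (Fin 4) ⧸ H) = a ∧
          (η : Equiv.Perm (Fin 4) ⧸ H) = b ∧ starGraph3.Adj ξ η) ∨
       (∃ ξ η : Equiv.Perm (Fin 4), (ξ : Equiv.Perm (Fin 4) ⧸ H) = b ∧
          (η : Equiv.Perm (Fin 4) ⧸ H) = a ∧ starGraph3.Adj ξ η)) := by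
  simp only [starQuotient, SimpleGraph.fromRel_adj]

def toPair (ξ : Equiv.Perm (Fin 4)) : V :=
  ⟨(ξ 2, ξ 3), fun h => by simpa using ξ.injective h⟩

lemma mem_H_iff (σ : Equiv.Perm (Fin 4)) : σ ∈ H ↔ σ = 1 ∨ σ = s := by
  constructor
  · intro h
    obtain ⟨k, hk⟩ := h
    have hk' : s ^ k = σ := hk
    rw [← hk']
    have hs : s * s = 1 := Equiv.swap_mul_self 0 1
    have h2 : s ^ (2 : ℤ) = 1 := by rw [zpow_two]; exact hs
    have hkk : s ^ k = s ^ (2 * (k / 2) + k % 2) := by rw [Int.mul_ediv_add_emod]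
    rw [hkk, zpow_add, zpow_mul, h2, one_zpow, one_mul]
    rcases Int.emod_two_eq k with h | h <;> rw [h]
    · left; exact zpow_zero s
    · right; exact zpow_one s
  · rintro (rfl | rfl)
    · exact one_mem _
    · exact Subgroup.mem_zpowers s

lemma fix_mem (σ : Equiv.Perm (Fin 4)) (h2 : σ 2 = 2) (h3 : σ 3 = 3) : σ ∈ H := by
  rw [mem_H_iff]
  revert h2 h3; revert σ; decide

lemma coset_eq_iff (ξ η : Equiv.Perm (Fin 4)) :
    (ξ : Equiv.Perm (Fin 4) ⧸ H) = η ↔ toPair ξ = toPair η := by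
  rw [QuotientGroup.eq]
  constructor
  · intro h
    rcases (mem_H_iff _).1 h with h' | h'
    · have hη : η = ξ := by
        have := congrArg (ξ * ·) h'
        simpa [mul_inv_cancel_left] using this
      rw [hη]
    · have hη : η = ξ * s := by
        have := congrArg (ξ * ·) h'
        simpa [mul_inv_cancel_left] using this
      subst hη
      apply Subtype.ext
      show (ξ 2, ξ 3) = (ξ (s 2), ξ (s 3))
      have e2 : s 2 = 2 := by decide
      have e3 : s 3 = 3 := by decide
      rw [e2, e3]
  · intro h
    have h2 : ξ 2 = η 2 := congrArg (Prod.fst ∘ Subtype.val) h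
    have h3 : ξ 3 = η 3 := congrArg (Prod.snd ∘ Subtype.val) h
    apply fix_mem
    · show ξ⁻¹ (η 2) = 2
      rw [← h2]; exact ξ.symm_apply_apply 2
    · show ξ⁻¹ (η 3) = 3
      rw [← h3]; exact ξ.symm_apply_apply 3

def f (q : Equiv.Perm (Fin 4) ⧸ H) : V :=
  Quotient.liftOn' q toPair (fun a b hab => by
    rw [← coset_eq_iff]
    exact Quotient.sound' hab)

lemma f_bij : Function.Bijective f := by
  constructor
  · intro a b
    induction a using Quotient.inductionOn' with | h ξ =>
    induction b using Quotient.inductionOn' with | h η =>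
    intro h
    exact (coset_eq_iff ξ η).2 h
  · intro p
    have : ∃ ξ : Equiv.Perm (Fin 4), (ξ 2, ξ 3) = p.1 := by revert p; decide
    obtain ⟨ξ, hξ⟩ := this
    exact ⟨(ξ : Equiv.Perm (Fin 4) ⧸ H), Subtype.ext hξ⟩

lemma ne_mul (ξ : Equiv.Perm (Fin 4)) (i : Fin 3) :
    toPair ξ ≠ toPair (ξ * Equiv.swap (Fin.castSucc i) (Fin.last 3)) := by
  intro h
  have h2 : ξ 2 = ξ (Equiv.swap (Fin.castSucc i) (Fin.last 3) 2) :=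
    congrArg (Prod.fst ∘ Subtype.val) h
  have h3 : ξ 3 = ξ (Equiv.swap (Fin.castSucc i) (Fin.last 3) 3) :=
    congrArg (Prod.snd ∘ Subtype.val) h
  have h2' := ξ.injective h2
  have h3' := ξ.injective h3
  revert h2' h3'
  fin_cases i <;> decide

lemma R_mul (ξ : Equiv.Perm (Fin 4)) (i : Fin 3) :
    R (toPair ξ) (toPair (ξ * Equiv.swap (Fin.castSucc i) (Fin.last 3))) := by
  fin_cases i
  · refine Or.inl ⟨congrArg ξ (by decide), fun h => ?_⟩
    have := ξ.injective h
    revert this; decide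
  · refine Or.inl ⟨congrArg ξ (by decide), fun h => ?_⟩
    have := ξ.injective h
    revert this; decide
  · exact Or.inr ⟨congrArg ξ (by decide), congrArg ξ (by decide)⟩

lemma star_adj (ξ : Equiv.Perm (Fin 4)) (i : Fin 3) :
    starGraph3.Adj ξ (ξ * Equiv.swap (Fin.castSucc i) (Fin.last 3)) := by
  rw [sg_adj_iff]
  refine ⟨fun h => ?_, Or.inl ⟨i, rfl⟩⟩
  have h1 : ξ * 1 = ξ * Equiv.swap (Fin.castSucc i) (Fin.last 3) := by
    rw [mul_one]; exact h
  have h2 : (1 : Equiv.Perm (Fin 4)) = Equiv.swap (Fin.castSucc i) (Fin.last 3) :=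
    mul_left_cancel h1
  have h3 : (Fin.castSucc i : Fin 4) = Fin.last 3 := by
    rwa [eq_comm, Equiv.swap_eq_one_iff] at h2
  exact (Fin.castSucc_lt_last i).ne h3

lemma lift_edge (ξ η : Equiv.Perm (Fin 4)) (h : R (toPair ξ) (toPair η)) :
    ∃ η' : Equiv.Perm (Fin 4),
      (η' : Equiv.Perm (Fin 4) ⧸ H) = (η : Equiv.Perm (Fin 4) ⧸ H) ∧
      starGraph3.Adj ξ η' := by
  rcases h with ⟨h1, h2⟩ | ⟨h1, h2⟩
  · -- ξ 2 = η 2, ξ 3 ≠ η 3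
    have h1 : ξ 2 = η 2 := h1
    have h2 : ξ 3 ≠ η 3 := h2
    obtain ⟨j, hξj⟩ : ∃ j, ξ j = η 3 := ⟨ξ⁻¹ (η 3), ξ.apply_symm_apply _⟩
    have hj2 : j ≠ 2 := by
      intro hh; rw [hh] at hξj
      have : η 2 = η 3 := h1.symm.trans hξj
      have := η.injective this
      exact absurd this (by decide)
    have hj3 : j ≠ 3 := by
      intro hh; rw [hh] at hξj; exact h2 hξj
    have key : ∀ i : Fin 3, (Fin.castSucc i : Fin 4) = j →
        ∃ η' : Equiv.Perm (Fin 4),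
          (η' : Equiv.Perm (Fin 4) ⧸ H) = (η : Equiv.Perm (Fin 4) ⧸ H) ∧
          starGraph3.Adj ξ η' := by
      intro i hi
      refine ⟨ξ * Equiv.swap (Fin.castSucc i) (Fin.last 3), ?_, star_adj ξ i⟩
      rw [coset_eq_iff]
      apply Subtype.ext
      show (ξ (Equiv.swap (Fin.castSucc i) (Fin.last 3) 2),
            ξ (Equiv.swap (Fin.castSucc i) (Fin.last 3) 3)) = (η 2, η 3)
      have h2c : (2 : Fin 4) ≠ Fin.castSucc i := by
        rw [hi]; exact fun hh => hj2 hh.symm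
      have e2 : Equiv.swap (Fin.castSucc i : Fin 4) (Fin.last 3) 2 = 2 :=
        Equiv.swap_apply_of_ne_of_ne h2c (by decide)
      have e3 : Equiv.swap (Fin.castSucc i : Fin 4) (Fin.last 3) 3 =
          (Fin.castSucc i : Fin 4) := Equiv.swap_apply_right _ _
      rw [e2, e3, hi, hξj, h1]
    have hj01 : j = 0 ∨ j = 1 := by
      revert hj2 hj3; fin_cases j <;> simp
    rcases hj01 with h | h
    · exact key 0 (by rw [h]; decide)
    · exact key 1 (by rw [h]; decide)
  · -- ξ 2 = η 3, ξ 3 = η 2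
    have h1 : ξ 2 = η 3 := h1
    have h2 : ξ 3 = η 2 := h2
    refine ⟨ξ * Equiv.swap (Fin.castSucc (2 : Fin 3)) (Fin.last 3), ?_, star_adj ξ 2⟩
    rw [coset_eq_iff]
    apply Subtype.ext
    show (ξ (Equiv.swap (Fin.castSucc (2 : Fin 3)) (Fin.last 3) 2),
          ξ (Equiv.swap (Fin.castSucc (2 : Fin 3)) (Fin.last 3) 3)) = (η 2, η 3)
    have e2 : Equiv.swap (Fin.castSucc (2 : Fin 3)) (Fin.last 3) (2 : Fin 4) = 3 := by decide
    have e3 : Equiv.swap (Fin.castSucc (2 : Fin 3)) (Fin.last 3) (3 : Fin 4) = 2 := by decide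
    rw [e2, e3, h1, h2]

lemma quot_edge (α β α' β' : Equiv.Perm (Fin 4))
    (hα : (α' : Equiv.Perm (Fin 4) ⧸ H) = (α : Equiv.Perm (Fin 4) ⧸ H))
    (hβ : (β' : Equiv.Perm (Fin 4) ⧸ H) = (β : Equiv.Perm (Fin 4) ⧸ H))
    (hadj : starGraph3.Adj α' β') :
    R (toPair α) (toPair β) ∨ R (toPair β) (toPair α) := by
  have hpα : toPair α' = toPair α := (coset_eq_iff α' α).1 hα
  have hpβ : toPair β' = toPair β := (coset_eq_iff β' β).1 hβ
  rw [sg_adj_iff] at hadj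
  rcases hadj.2 with ⟨i, rfl⟩ | ⟨i, rfl⟩
  · left
    have := R_mul α' i
    rwa [hpα, hpβ] at this
  · right
    have := R_mul β' i
    rwa [hpβ, hpα] at this

lemma map_rel (a b : Equiv.Perm (Fin 4) ⧸ H) :
    truncatedTetrahedron.Adj (f a) (f b) ↔ (starQuotient H).Adj a b := by
  induction a using Quotient.inductionOn' with | h ξ =>
  induction b using Quotient.inductionOn' with | h η =>
  show truncatedTetrahedron.Adj (toPair ξ) (toPair η) ↔ _
  rw [tt_adj_iff, sq_adj_iff]
  constructor
  · rintro ⟨hne, h⟩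
    refine ⟨fun h' => hne ((coset_eq_iff ξ η).1 h'), ?_⟩
    rcases h with h | h
    · obtain ⟨η', hη', hadj⟩ := lift_edge ξ η h
      exact Or.inl ⟨ξ, η', rfl, hη', hadj⟩
    · obtain ⟨ξ', hξ', hadj⟩ := lift_edge η ξ h
      exact Or.inr ⟨η, ξ', rfl, hξ', hadj⟩
  · rintro ⟨hne, h⟩
    refine ⟨fun h' => hne ((coset_eq_iff ξ η).2 h'), ?_⟩
    rcases h with ⟨ξ', η', hξ', hη', hadj⟩ | ⟨η', ξ', hη', hξ', hadj⟩
    · exact quot_edge ξ η ξ' η' hξ' hη' hadj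
    · exact (quot_edge η ξ η' ξ' hη' hξ' hadj).symm

end StarQuotAux

/-- The quotient of the star graph `X_3` by the right action of `⟨(1,2)⟩` is isomorphic
to the truncated tetrahedron graph. -/
theorem starQuotient_transposition_iso_truncatedTetrahedron :
    Nonempty
      (starQuotient (Subgroup.zpowers (Equiv.swap (0 : Fin 4) 1)) ≃g
        truncatedTetrahedron) := by
  exact ⟨⟨Equiv.ofBijective StarQuotAux.f StarQuotAux.f_bij,
    fun {a b} => StarQuotAux.map_rel a b⟩⟩
end

section
/- The characteristic polynomial of the adjacency matrix of the star graph X_3 = Cay(S_4, {(1,4),(2,4),(3,4)}) equals (x+3)(x+2)^6(x+1)^3 x^4 (x-1)^3 (x-2)^6 (x-3). -/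
open Equiv Equiv.Perm Polynomial
open scoped Classical

set_option maxHeartbeats 1000000

def sg3rel (ξ η : Equiv.Perm (Fin 4)) : Prop :=
  ∃ i : Fin 3, η = ξ * Equiv.swap (Fin.castSucc i) (Fin.last 3)

instance (ξ η : Equiv.Perm (Fin 4)) : Decidable (sg3rel ξ η) :=
  Fintype.decidableExistsFintype

def sg3g : Fin 24 → Equiv.Perm (Fin 4) :=
  ![⟨![0,1,2,3], ![0,1,2,3], by decide, by decide⟩,
    ⟨![0,1,3,2], ![0,1,3,2], by decide, by decide⟩,
    ⟨![0,2,1,3], ![0,2,1,3], by decide, by decide⟩,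
    ⟨![0,2,3,1], ![0,3,1,2], by decide, by decide⟩,
    ⟨![0,3,1,2], ![0,2,3,1], by decide, by decide⟩,
    ⟨![0,3,2,1], ![0,3,2,1], by decide, by decide⟩,
    ⟨![1,0,2,3], ![1,0,2,3], by decide, by decide⟩,
    ⟨![1,0,3,2], ![1,0,3,2], by decide, by decide⟩,
    ⟨![1,2,0,3], ![2,0,1,3], by decide, by decide⟩,
    ⟨![1,2,3,0], ![3,0,1,2], by decide, by decide⟩,
    ⟨![1,3,0,2], ![2,0,3,1], by decide, by decide⟩,
    ⟨![1,3,2,0], ![3,0,2,1], by decide, by decide⟩,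
    ⟨![2,0,1,3], ![1,2,0,3], by decide, by decide⟩,
    ⟨![2,0,3,1], ![1,3,0,2], by decide, by decide⟩,
    ⟨![2,1,0,3], ![2,1,0,3], by decide, by decide⟩,
    ⟨![2,1,3,0], ![3,1,0,2], by decide, by decide⟩,
    ⟨![2,3,0,1], ![2,3,0,1], by decide, by decide⟩,
    ⟨![2,3,1,0], ![3,2,0,1], by decide, by decide⟩,
    ⟨![3,0,1,2], ![1,2,3,0], by decide, by decide⟩,
    ⟨![3,0,2,1], ![1,3,2,0], by decide, by decide⟩,
    ⟨![3,1,0,2], ![2,1,3,0], by decide, by decide⟩,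
    ⟨![3,1,2,0], ![3,1,2,0], by decide, by decide⟩,
    ⟨![3,2,0,1], ![2,3,1,0], by decide, by decide⟩,
    ⟨![3,2,1,0], ![3,2,1,0], by decide, by decide⟩]

def sg3Bex : Matrix (Fin 24) (Fin 24) ℤ := Matrix.of !![0,1,0,0,0,1,0,0,0,0,0,0,0,0,0,0,0,0,0,0,0,1,0,0;
  1,0,0,1,0,0,0,0,0,0,0,0,0,0,0,1,0,0,0,0,0,0,0,0;
  0,0,0,1,1,0,0,0,0,0,0,0,0,0,0,0,0,0,0,0,0,0,0,1;
  0,1,1,0,0,0,0,0,0,1,0,0,0,0,0,0,0,0,0,0,0,0,0,0;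
  0,0,1,0,0,1,0,0,0,0,0,0,0,0,0,0,0,1,0,0,0,0,0,0;
  1,0,0,0,1,0,0,0,0,0,0,1,0,0,0,0,0,0,0,0,0,0,0,0;
  0,0,0,0,0,0,0,1,0,0,0,1,0,0,0,0,0,0,0,1,0,0,0,0;
  0,0,0,0,0,0,1,0,0,1,0,0,0,1,0,0,0,0,0,0,0,0,0,0;
  0,0,0,0,0,0,0,0,0,1,1,0,0,0,0,0,0,0,0,0,0,0,1,0;
  0,0,0,1,0,0,0,1,1,0,0,0,0,0,0,0,0,0,0,0,0,0,0,0;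
  0,0,0,0,0,0,0,0,1,0,0,1,0,0,0,0,1,0,0,0,0,0,0,0;
  0,0,0,0,0,1,1,0,0,0,1,0,0,0,0,0,0,0,0,0,0,0,0,0;
  0,0,0,0,0,0,0,0,0,0,0,0,0,1,0,0,0,1,1,0,0,0,0,0;
  0,0,0,0,0,0,0,1,0,0,0,0,1,0,0,1,0,0,0,0,0,0,0,0;
  0,0,0,0,0,0,0,0,0,0,0,0,0,0,0,1,1,0,0,0,1,0,0,0;
  0,1,0,0,0,0,0,0,0,0,0,0,0,1,1,0,0,0,0,0,0,0,0,0;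
  0,0,0,0,0,0,0,0,0,0,1,0,0,0,1,0,0,1,0,0,0,0,0,0;
  0,0,0,0,1,0,0,0,0,0,0,0,1,0,0,0,1,0,0,0,0,0,0,0;
  0,0,0,0,0,0,0,0,0,0,0,0,1,0,0,0,0,0,0,1,0,0,0,1;
  0,0,0,0,0,0,1,0,0,0,0,0,0,0,0,0,0,0,1,0,0,1,0,0;
  0,0,0,0,0,0,0,0,0,0,0,0,0,0,1,0,0,0,0,0,0,1,1,0;
  1,0,0,0,0,0,0,0,0,0,0,0,0,0,0,0,0,0,0,1,1,0,0,0;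
  0,0,0,0,0,0,0,0,1,0,0,0,0,0,0,0,0,0,0,0,1,0,0,1;
  0,0,1,0,0,0,0,0,0,0,0,0,0,0,0,0,0,0,1,0,0,0,1,0]

def sg3P : Matrix (Fin 24) (Fin 24) ℤ := Matrix.of !![1,0,-1,-1,2,0,0,-1,1,-1,0,0,0,1,-1,-1,-1,0,-1,-1,-2,0,0,1;
  1,-1,-1,1,0,-2,1,-1,0,0,0,0,1,0,1,0,0,-1,1,-1,0,-2,-1,-1;
  1,0,-1,-1,1,0,1,1,-1,1,0,1,0,0,-1,-1,-1,0,1,1,1,0,-1,-1;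
  1,-1,-1,0,0,-1,1,0,-1,0,1,0,0,0,0,1,0,1,-1,0,0,1,1,1;
  1,1,-1,-2,2,1,0,1,0,0,-1,0,0,-1,1,0,0,-1,-1,-2,-2,-1,0,1;
  1,1,-1,-3,3,2,-1,0,1,0,0,-1,-1,0,0,1,0,1,1,3,3,2,1,-1;
  1,0,1,-1,0,1,-1,1,-1,1,0,0,1,0,-1,-1,-1,0,-1,1,0,1,1,-1;
  1,-1,1,1,-2,-1,0,1,0,0,0,0,0,1,1,0,0,1,1,1,2,1,0,1;
  1,0,0,-1,0,2,-1,-1,1,-1,-1,0,0,-1,-1,-1,-1,0,0,-1,0,-2,-1,1;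
  1,-1,0,0,-1,0,0,0,0,-1,0,-1,-1,0,0,0,1,-1,0,0,-1,0,0,-1;
  1,1,0,-2,1,3,-2,-1,0,0,0,1,0,0,1,0,0,1,0,2,1,3,2,-1;
  1,1,0,-3,2,3,-2,0,0,1,1,0,0,0,0,0,1,-1,0,-3,-2,-3,-2,1;
  1,0,1,2,-2,-2,1,-1,1,-1,1,0,0,0,-1,-1,-1,0,1,2,2,2,1,1;
  1,-1,1,3,-3,-3,1,0,1,0,0,1,0,0,0,1,0,-1,-1,-3,-3,-3,-1,-1;
  1,0,0,2,-1,-1,0,1,-1,1,0,-1,-1,0,-1,-1,-1,0,0,-2,-1,-1,0,-1;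
  1,-1,0,3,-2,-3,1,0,0,1,-1,0,0,-1,0,0,1,1,0,3,2,3,1,1;
  1,1,0,0,0,1,-1,0,-1,0,0,0,0,1,0,1,0,-1,0,0,0,-1,-1,1;
  1,1,0,0,0,0,0,0,0,-1,0,0,1,0,0,0,1,1,0,0,0,0,0,-1;
  1,0,1,1,-1,-1,1,-1,0,0,0,-1,-1,0,1,0,0,0,-1,-1,-1,-1,-1,-1;
  1,0,1,0,0,0,0,0,-1,0,-1,0,0,-1,0,1,0,0,1,0,0,0,0,1;
  1,0,0,1,0,0,0,1,0,0,1,0,0,0,1,0,0,0,0,1,0,0,0,1;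
  1,0,0,0,1,0,0,0,0,-1,0,1,0,0,0,0,1,0,0,0,1,0,0,-1;
  1,0,0,0,0,1,0,0,1,0,0,0,1,0,0,1,0,0,0,0,0,1,0,-1;
  1,0,0,0,0,0,1,0,0,1,0,0,0,1,0,0,1,0,0,0,0,0,1,1]

def sg3Q : Matrix (Fin 24) (Fin 24) ℤ := Matrix.of !![1,1,1,1,1,1,1,1,1,1,1,1,1,1,1,1,1,1,1,1,1,1,1,1;
  -2,-2,1,-2,4,1,-2,-2,-2,-3,1,0,4,1,1,0,4,6,1,-2,-2,-3,-2,0;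
  1,-2,-2,-3,-2,0,4,1,-2,-2,-2,1,1,0,-2,-2,-3,-2,4,6,1,4,0,1;
  1,0,-2,-2,-3,-2,-2,-3,1,-2,0,-2,-2,-2,4,1,1,-2,0,1,6,4,4,1;
  4,1,-2,-2,-2,1,1,-2,-2,-3,-2,0,-2,-2,1,0,-2,-3,1,4,4,6,1,0;
  -2,-2,1,0,-2,-3,-2,-2,4,1,1,-2,-2,-3,1,-2,0,-2,1,0,4,1,6,4;
  -2,-2,4,1,1,-2,-2,-2,1,0,-2,-3,1,-2,-2,-3,-2,0,4,1,1,0,4,6;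
  -1,-3,1,-1,3,1,1,3,-1,1,-3,-1,-1,1,1,-1,-1,1,-3,-1,3,1,1,-1;
  1,-1,-1,-3,1,3,-1,1,1,-1,-1,1,1,3,-1,1,-3,-1,-1,-3,1,-1,3,1;
  -1,1,1,-1,-1,1,1,-1,-1,-3,1,3,-1,1,1,3,-1,-3,1,-1,-1,-3,1,3;
  -2,0,0,4,-2,0,0,-2,-2,0,0,4,4,0,0,-2,-2,0,0,-2,4,0,0,-2;
  0,-2,4,0,0,-2,-2,0,0,-2,4,0,0,4,-2,0,0,-2,-2,0,0,4,-2,0;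
  0,4,-2,0,0,-2,4,0,0,-2,-2,0,0,-2,-2,0,0,4,-2,0,0,-2,4,0;
  4,0,0,-2,-2,0,0,4,-2,0,0,-2,-2,0,0,-2,4,0,0,-2,-2,0,0,4;
  -1,3,-1,-1,3,-1,-1,3,-1,-1,3,-1,-1,-1,-1,-1,-1,-1,3,-1,3,-1,-1,-1;
  -1,-1,-1,3,-1,3,-1,-1,-1,-1,-1,-1,-1,3,-1,-1,3,-1,-1,3,-1,-1,3,-1;
  -1,-1,-1,-1,-1,-1,-1,-1,-1,3,-1,3,-1,-1,-1,3,-1,3,-1,-1,-1,3,-1,3;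
  2,-2,1,2,-4,1,-2,2,2,-3,1,0,-4,1,1,0,-4,6,1,2,2,-3,-2,0;
  1,2,2,-3,-2,0,-4,1,-2,2,2,1,1,0,2,-2,-3,2,-4,6,1,-4,0,1;
  1,0,2,-2,-3,2,2,-3,1,2,0,-2,-2,2,-4,1,1,2,0,1,6,-4,-4,1;
  -4,1,-2,2,2,1,1,2,2,-3,-2,0,2,-2,1,0,2,-3,1,-4,-4,6,1,0;
  2,-2,1,0,2,-3,-2,2,-4,1,1,2,2,-3,1,2,0,-2,1,0,-4,1,6,-4;
  -2,2,-4,1,1,2,2,-2,1,0,2,-3,1,2,2,-3,-2,0,-4,1,1,0,-4,6;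
  1,-1,-1,1,1,-1,-1,1,1,-1,-1,1,1,-1,-1,1,1,-1,-1,1,1,-1,-1,1]

def sg3d : Fin 24 → ℤ := ![3,2,2,2,2,2,2,1,1,1,0,0,0,0,-1,-1,-1,-2,-2,-2,-2,-2,-2,-3]

def sg3B : Matrix (Fin 24) (Fin 24) ℤ :=
  Matrix.of fun i j =>
    if sg3g i ≠ sg3g j ∧ (sg3rel (sg3g i) (sg3g j) ∨ sg3rel (sg3g j) (sg3g i)) then 1 else 0

set_option maxRecDepth 100000 in
lemma sg3g_bij : Function.Bijective sg3g := by decide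

noncomputable def sg3e : Fin 24 ≃ Equiv.Perm (Fin 4) := Equiv.ofBijective sg3g sg3g_bij

set_option maxRecDepth 1000000 in
lemma sg3B_eq : sg3B = sg3Bex := by decide

set_option maxRecDepth 1000000 in
lemma sg3BP : sg3Bex * sg3P = sg3P * Matrix.diagonal sg3d := by decide

set_option maxRecDepth 1000000 in
lemma sg3PQ : sg3P * sg3Q = Matrix.diagonal (fun _ => (24 : ℤ)) := by decide

lemma charpoly_similar {n : Type*} [DecidableEq n] [Fintype n]
    (P B D : Matrix n n ℚ) (hP : IsUnit P.det) (h : B * P = P * D) :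
    B.charpoly = D.charpoly := by
  have hPc : IsUnit ((P.map (C : ℚ →+* ℚ[X])).det) := by
    rw [← RingHom.mapMatrix_apply, ← RingHom.map_det]
    exact hP.map (C : ℚ →+* ℚ[X])
  have hsc : ∀ M : Matrix n n ℚ[X], Matrix.scalar n (X : ℚ[X]) * M = M * Matrix.scalar n X :=
    fun M => (Matrix.scalar_commute (X : ℚ[X]) (fun r => Commute.all _ _) M)
  have key : Matrix.charmatrix B * P.map (C : ℚ →+* ℚ[X])
      = P.map (C : ℚ →+* ℚ[X]) * Matrix.charmatrix D := by
    unfold Matrix.charmatrix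
    rw [sub_mul, mul_sub, hsc, RingHom.mapMatrix_apply,
      RingHom.mapMatrix_apply, ← Matrix.map_mul, h, Matrix.map_mul]
  have hdet := congrArg Matrix.det key
  rw [Matrix.det_mul, Matrix.det_mul] at hdet
  have : B.charpoly * (P.map (C : ℚ →+* ℚ[X])).det = D.charpoly * (P.map (C : ℚ →+* ℚ[X])).det := by
    unfold Matrix.charpoly
    rw [hdet, mul_comm]
  exact mul_right_cancel₀ hPc.ne_zero this

/-- The characteristic polynomial of the adjacency matrix of the star graph `X_3` is
`(x+3)(x+2)^6(x+1)^3 x^4 (x-1)^3 (x-2)^6 (x-3)`. -/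
theorem starGraph3_charpoly :
    (SimpleGraph.adjMatrix ℤ starGraph3).charpoly =
      (X + 3) * (X + 2) ^ 6 * (X + 1) ^ 3 * X ^ 4 * (X - 1) ^ 3 * (X - 2) ^ 6
        * (X - 3) := by
  have key : ∀ ξ η, starGraph3.Adj ξ η ↔ ξ ≠ η ∧ (sg3rel ξ η ∨ sg3rel η ξ) := by
    intro ξ η
    simp [starGraph3, SimpleGraph.fromRel_adj, sg3rel]
  have hA : SimpleGraph.adjMatrix ℤ starGraph3 = Matrix.reindex sg3e sg3e sg3B := by
    funext ξ η
    have h1 : sg3g (sg3e.symm ξ) = ξ := sg3e.apply_symm_apply ξ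
    have h2 : sg3g (sg3e.symm η) = η := sg3e.apply_symm_apply η
    simp only [Matrix.reindex_apply, Matrix.submatrix_apply, sg3B, Matrix.of_apply, h1, h2,
      SimpleGraph.adjMatrix_apply]
    exact if_congr (key ξ η) rfl rfl
  rw [hA, Matrix.charpoly_reindex, sg3B_eq]
  have hinj : Function.Injective (Polynomial.map (Int.castRingHom ℚ)) :=
    Polynomial.map_injective _ Int.cast_injective
  apply hinj
  rw [← Matrix.charpoly_map]
  set f := Int.castRingHom ℚ with hf
  have hPQq : sg3P.map f * sg3Q.map f = Matrix.diagonal (fun _ => (24 : ℚ)) := by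
    rw [← Matrix.map_mul, sg3PQ, Matrix.diagonal_map (map_zero f)]
    norm_num [hf]
  have hPunit : IsUnit ((sg3P.map f).det) := by
    apply Matrix.isUnit_det_of_right_inverse (B := (24 : ℚ)⁻¹ • sg3Q.map f)
    rw [Matrix.mul_smul, hPQq]
    ext i j
    by_cases hij : i = j <;>
      simp [hij, Matrix.diagonal, Matrix.one_apply]
  have hsim : (sg3Bex.map f).charpoly
      = (Matrix.diagonal (fun i => (sg3d i : ℚ))).charpoly := by
    apply charpoly_similar (sg3P.map f) _ _ hPunit
    have : (Matrix.diagonal sg3d).map f = Matrix.diagonal (fun i => (sg3d i : ℚ)) := by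
      exact Matrix.diagonal_map (map_zero f)
    rw [← this, ← Matrix.map_mul, ← Matrix.map_mul, sg3BP]
  rw [hsim, Matrix.charpoly_of_upperTriangular _ (Matrix.blockTriangular_diagonal _)]
  simp only [Matrix.diagonal_apply_eq]
  simp only [Fin.prod_univ_succ, Fin.prod_univ_zero, sg3d, Matrix.cons_val_zero,
    Matrix.cons_val_succ, Matrix.cons_val_fin_one]
  push_cast
  simp only [Polynomial.map_mul, Polynomial.map_pow, Polynomial.map_add, Polynomial.map_sub,
    Polynomial.map_X, Polynomial.map_one, Polynomial.map_ofNat, map_ofNat, map_neg, map_one, map_zero,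
    Polynomial.C_0, Polynomial.C_1]
  ring
end

section
/- The characteristic polynomial of the adjacency matrix of the truncated tetrahedron graph equals (x+2)^3(x+1)^3 x^2 (x-2)^3 (x-3). -/
open Polynomial
open scoped Classical

set_option maxRecDepth 10000

namespace TruncTetAux

abbrev V : Type := {p : Fin 4 × Fin 4 // p.1 ≠ p.2}

/-- A computable decidability witness for adjacency (not an instance). -/
def adjDec : DecidableRel truncatedTetrahedron.Adj := fun a b =>
  decidable_of_iff _ (SimpleGraph.fromRel_adj _ a b).symm

/-- The adjacency matrix with the computable instance. -/
def M' : Matrix V V ℤ :=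
  Matrix.of fun i j => @ite ℤ (truncatedTetrahedron.Adj i j) (adjDec i j) 1 0

def vmap : Fin 12 → V :=
  ![⟨(0,1), by decide⟩, ⟨(0,2), by decide⟩, ⟨(0,3), by decide⟩,
    ⟨(1,0), by decide⟩, ⟨(1,2), by decide⟩, ⟨(1,3), by decide⟩,
    ⟨(2,0), by decide⟩, ⟨(2,1), by decide⟩, ⟨(2,3), by decide⟩,
    ⟨(3,0), by decide⟩, ⟨(3,1), by decide⟩, ⟨(3,2), by decide⟩]

def idx (v : V) : Fin 12 :=
  ⟨3 * (v.1.1 : ℕ) + (if (v.1.2 : ℕ) < (v.1.1 : ℕ) then (v.1.2 : ℕ) else (v.1.2 : ℕ) - 1), by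
    have h1 := v.1.1.isLt
    have h2 := v.1.2.isLt
    split <;> omega⟩

def e : V ≃ Fin 12 :=
  ⟨idx, vmap, by decide, by decide⟩

def M : Matrix (Fin 12) (Fin 12) ℤ :=
  !![0, 1, 1, 1, 0, 0, 0, 0, 0, 0, 0, 0;
  1, 0, 1, 0, 0, 0, 1, 0, 0, 0, 0, 0;
  1, 1, 0, 0, 0, 0, 0, 0, 0, 1, 0, 0;
  1, 0, 0, 0, 1, 1, 0, 0, 0, 0, 0, 0;
  0, 0, 0, 1, 0, 1, 0, 1, 0, 0, 0, 0;
  0, 0, 0, 1, 1, 0, 0, 0, 0, 0, 1, 0;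
  0, 1, 0, 0, 0, 0, 0, 1, 1, 0, 0, 0;
  0, 0, 0, 0, 1, 0, 1, 0, 1, 0, 0, 0;
  0, 0, 0, 0, 0, 0, 1, 1, 0, 0, 0, 1;
  0, 0, 1, 0, 0, 0, 0, 0, 0, 0, 1, 1;
  0, 0, 0, 0, 0, 1, 0, 0, 0, 1, 0, 1;
  0, 0, 0, 0, 0, 0, 0, 0, 1, 1, 1, 0]

def P : Matrix (Fin 12) (Fin 12) ℤ :=
  !![1, 3, -1, -3, 0, 1, 0, 1, 0, -1, -1, 0;
  1, 3, -3, -1, 1, 0, 0, 0, 1, 1, 0, -1;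
  1, 4, -2, -2, -1, -1, -1, -1, -1, 0, 1, 1;
  1, -1, 3, -3, 0, 1, 1, 0, 0, 1, 1, 0;
  1, -3, 3, -1, -1, -1, 0, 0, 1, -1, 0, 0;
  1, -2, 4, -2, 1, 0, -1, -1, -1, 0, -1, 0;
  1, -1, -3, 3, 1, 0, 1, 0, 0, -1, 0, 1;
  1, -3, -1, 3, -1, -1, 0, 1, 0, 1, 0, 0;
  1, -2, -2, 4, 0, 1, -1, -1, -1, 0, 0, -1;
  1, 2, 0, 0, -1, -1, 1, 0, 0, 0, -1, -1;
  1, 0, 2, 0, 1, 0, 0, 1, 0, 0, 1, 0;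
  1, 0, 0, 2, 0, 1, 0, 0, 1, 0, 0, 1]

def Q : Matrix (Fin 12) (Fin 12) ℤ :=
  !![55296, 55296, 55296, 55296, 55296, 55296, 55296, 55296, 55296, 55296, 55296, 55296;
  -13824, -13824, 27648, -41472, -55296, -13824, -41472, -55296, -13824, 82944, 69120, 69120;
  -41472, -55296, -13824, -13824, -13824, 27648, -55296, -41472, -13824, 69120, 82944, 69120;
  -55296, -41472, -13824, -55296, -41472, -13824, -13824, -13824, 27648, 69120, 69120, 82944;
  -55296, 110592, -55296, -55296, -55296, 110592, 110592, -55296, -55296, -55296, 110592, -55296;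
  110592, -55296, -55296, 110592, -55296, -55296, -55296, -55296, 110592, -55296, -55296, 110592;
  -55296, -55296, -55296, 165888, -55296, -55296, 165888, -55296, -55296, 165888, -55296, -55296;
  165888, -55296, -55296, -55296, -55296, -55296, -55296, 165888, -55296, -55296, 165888, -55296;
  -55296, 165888, -55296, -55296, 165888, -55296, -55296, -55296, -55296, -55296, -55296, 165888;
  -82944, 82944, 0, 82944, -165888, 82944, -82944, 165888, -82944, 0, -82944, 82944;
  -82944, 0, 82944, 82944, 82944, -165888, 0, -82944, 82944, -82944, 165888, -82944;
  0, -82944, 82944, 0, -82944, 82944, 82944, 82944, -165888, -82944, -82944, 165888]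

def d : Fin 12 → ℤ := ![3, 2, 2, 2, 0, 0, -1, -1, -1, -2, -2, -2]

lemma hMP : M * P = P * Matrix.diagonal d := by decide

lemma hPQ : P * Q = (663552 : ℤ) • 1 := by decide

lemma helper {n : Type} [Fintype n] [DecidableEq n]
    (A P Q : Matrix n n ℤ) (c : ℤ) (hc : c ≠ 0) (d : n → ℤ)
    (hMP : A * P = P * Matrix.diagonal d) (hPQ : P * Q = c • 1) :
    A.charpoly = ∏ i, (X - C (d i)) := by
  have detP_ne : P.det ≠ 0 := by
    intro h
    have hdet : P.det * Q.det = c ^ Fintype.card n := by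
      rw [← Matrix.det_mul, hPQ, Matrix.det_smul, Matrix.det_one, mul_one]
    rw [h, zero_mul] at hdet
    exact absurd hdet.symm (pow_ne_zero _ hc)
  have key : Matrix.charmatrix A * P.map (C : ℤ →+* ℤ[X])
      = P.map (C : ℤ →+* ℤ[X]) * Matrix.charmatrix (Matrix.diagonal d) := by
    have hscalar : ∀ (N : Matrix n n ℤ[X]),
        Matrix.scalar n (X : ℤ[X]) * N = N * Matrix.scalar n (X : ℤ[X]) := fun N =>
      (Matrix.scalar_commute (X : ℤ[X]) (fun r => mul_comm _ r) N)
    rw [Matrix.charmatrix, Matrix.charmatrix, sub_mul, mul_sub, hscalar]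
    congr 1
    have h2 := congrArg (fun (B : Matrix n n ℤ) => B.map (C : ℤ →+* ℤ[X])) hMP
    simp only [Matrix.map_mul] at h2
    simpa [RingHom.mapMatrix_apply] using h2
  have hcm : Matrix.charmatrix (Matrix.diagonal d)
      = Matrix.diagonal (fun i => (X : ℤ[X]) - C (d i)) := by
    ext i j
    by_cases h : i = j
    · subst h; simp
    · rw [Matrix.charmatrix_apply_ne _ _ _ h, Matrix.diagonal_apply_ne _ h,
        Matrix.diagonal_apply_ne _ h, map_zero, neg_zero]
  have hdet := congrArg Matrix.det key
  rw [Matrix.det_mul, Matrix.det_mul] at hdet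
  have hPdet : (P.map (C : ℤ →+* ℤ[X])).det = C P.det := by
    rw [← RingHom.mapMatrix_apply]
    exact (RingHom.map_det _ _).symm
  rw [hPdet, mul_comm (C P.det)] at hdet
  have hCne : (C P.det : ℤ[X]) ≠ 0 := fun h => detP_ne (C_injective (h.trans C_0.symm))
  have h3 := mul_right_cancel₀ hCne hdet
  rw [Matrix.charpoly, h3, hcm, Matrix.det_diagonal]

lemma charpolyM : M.charpoly = ∏ i : Fin 12, (X - C (d i)) :=
  helper M P Q 663552 (by norm_num) d hMP hPQ

lemma prod_eq : (∏ i : Fin 12, ((X : ℤ[X]) - C (d i)))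
    = (X + 2) ^ 3 * (X + 1) ^ 3 * X ^ 2 * (X - 2) ^ 3 * (X - 3) := by
  simp only [Fin.prod_univ_succ, Fin.prod_univ_zero, d]
  simp only [Matrix.cons_val_zero, Matrix.cons_val_succ, map_ofNat, map_neg, map_one,
    map_zero, Matrix.cons_val_fin_one]
  ring

lemma reindexed : Matrix.reindex e e M' = M := by
  have : ∀ i j : Fin 12, (Matrix.reindex e e M') i j = M i j := by
    intro i j; fin_cases i <;> fin_cases j <;> rfl
  ext i j
  exact this i j

end TruncTetAux

/-- The characteristic polynomial of the adjacency matrix of the truncated tetrahedron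
graph is `(x+2)^3(x+1)^3 x^2 (x-2)^3 (x-3)`. -/
theorem truncatedTetrahedron_charpoly :
    (SimpleGraph.adjMatrix ℤ truncatedTetrahedron).charpoly =
      (X + 2) ^ 3 * (X + 1) ^ 3 * X ^ 2 * (X - 2) ^ 3 * (X - 3) := by
  have hA : SimpleGraph.adjMatrix ℤ truncatedTetrahedron = TruncTetAux.M' := by
    ext i j
    by_cases h : truncatedTetrahedron.Adj i j
    · rw [SimpleGraph.adjMatrix_apply, if_pos h, TruncTetAux.M', Matrix.of_apply, if_pos h]
    · rw [SimpleGraph.adjMatrix_apply, if_neg h, TruncTetAux.M', Matrix.of_apply, if_neg h]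
  rw [hA, ← Matrix.charpoly_reindex TruncTetAux.e, TruncTetAux.reindexed,
    TruncTetAux.charpolyM, TruncTetAux.prod_eq]
end

section
/- The multiset {±|1 + e^{2πki/6} + e^{2π(−k+3l)i/6}| : k ∈ Z/6Z, l ∈ Z/2Z} consists only of integers, and equals the multiset {3,−3, 2,2,2,2,2,2, −2,−2,−2,−2,−2,−2, 1,1,1, −1,−1,−1, 0,0,0,0}. -/
open Complex

/-- The value `|1 + e^{2πki/6} + e^{2π(−k+3l)i/6}|` for `k ∈ ℤ/6ℤ`, `l ∈ ℤ/2ℤ`. -/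
noncomputable def honeycombEig (k : ZMod 6) (l : ZMod 2) : ℝ :=
  norm
    (1 + Complex.exp (2 * Real.pi * (k.val : ℂ) * Complex.I / 6)
       + Complex.exp (2 * Real.pi * (((-k + 3 * (l.val : ZMod 6)).val : ℕ) : ℂ)
            * Complex.I / 6))

/-- The 24-element multiset `{± honeycombEig k l}` over all `(k, l) ∈ ℤ/6ℤ × ℤ/2ℤ`. -/
noncomputable def honeycombSpectrum : Multiset ℝ :=
  ((Finset.univ : Finset (ZMod 6 × ZMod 2)).val.map fun p => honeycombEig p.1 p.2) +
  ((Finset.univ : Finset (ZMod 6 × ZMod 2)).val.map fun p => -honeycombEig p.1 p.2)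

noncomputable def ζ : ℂ := Complex.exp (2 * Real.pi * Complex.I / 6)

lemma hs3 : ((Real.sqrt 3 : ℝ) : ℂ)^2 = 3 := by
  norm_cast
  rw [Real.sq_sqrt] <;> norm_num

lemma z1 : ζ = 1/2 + (Real.sqrt 3 / 2) * I := by
  have h : (2 * (Real.pi:ℂ) * Complex.I / 6) = (↑(Real.pi/3) : ℂ) * Complex.I := by
    push_cast; ring
  rw [ζ, h, Complex.exp_mul_I, ← Complex.ofReal_cos, ← Complex.ofReal_sin,
     Real.cos_pi_div_three, Real.sin_pi_div_three]
  push_cast; ring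

lemma z2 : ζ^2 = -1/2 + (Real.sqrt 3 / 2) * I := by
  rw [pow_two, z1]
  linear_combination (Complex.I^2/4) * hs3 + ((3:ℂ)/4) * Complex.I_sq

lemma z3 : ζ^3 = -1 := by
  rw [pow_succ, z2, z1]
  linear_combination (Complex.I^2/4) * hs3 + ((3:ℂ)/4) * Complex.I_sq

lemma z4 : ζ^4 = -1/2 - (Real.sqrt 3 / 2) * I := by
  rw [show (4:ℕ)=3+1 from rfl, pow_add, z3, pow_one, z1]; ring

lemma z5 : ζ^5 = 1/2 - (Real.sqrt 3 / 2) * I := by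
  rw [show (5:ℕ)=3+2 from rfl, pow_add, z3, z2]; ring

lemma eig_eq (k : ZMod 6) (l : ZMod 2) :
    honeycombEig k l
      = norm (1 + ζ ^ k.val + ζ ^ ((-k + 3 * (l.val : ZMod 6)).val)) := by
  unfold honeycombEig ζ
  rw [show (2 * (Real.pi:ℂ) * (k.val:ℂ) * Complex.I / 6)
        = ((k.val:ℕ):ℂ) * (2 * (Real.pi:ℂ) * Complex.I / 6) by push_cast; ring,
      show (2 * (Real.pi:ℂ) * ((((-k + 3 * (l.val : ZMod 6)).val):ℕ):ℂ) * Complex.I / 6)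
        = ((((-k + 3 * (l.val : ZMod 6)).val):ℕ):ℂ) * (2 * (Real.pi:ℂ) * Complex.I / 6) by
          push_cast; ring,
      Complex.exp_nat_mul, Complex.exp_nat_mul]

lemma sqrt3_sq : Real.sqrt 3 ^ 2 = 3 := Real.sq_sqrt (by norm_num)

lemma abs2pos : norm (((1:ℝ):ℂ) + (Real.sqrt 3 : ℝ) * I) = 2 := by
  rw [Complex.norm_add_mul_I, one_pow, sqrt3_sq,
      show (1:ℝ) + 3 = 2^2 by norm_num, Real.sqrt_sq (by norm_num)]

lemma abs2neg : norm (((1:ℝ):ℂ) + ((-Real.sqrt 3 : ℝ):ℂ) * I) = 2 := by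
  rw [Complex.norm_add_mul_I, one_pow, neg_pow, sqrt3_sq,
      show (1:ℝ) + (-1)^2*3 = 2^2 by norm_num, Real.sqrt_sq (by norm_num)]

lemma e00 : honeycombEig 0 0 = 3 := by
  rw [eig_eq, show ((0:ZMod 6)).val = 0 from rfl,
      show ((-(0:ZMod 6) + 3 * ((0:ZMod 2).val : ZMod 6)).val) = 0 from rfl]
  norm_num

lemma e10 : honeycombEig 1 0 = 2 := by
  rw [eig_eq, show ((1:ZMod 6)).val = 1 from rfl,
      show ((-(1:ZMod 6) + 3 * ((0:ZMod 2).val : ZMod 6)).val) = 5 from rfl,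
      z5, pow_one, z1, show (1:ℂ) + (1/2 + (Real.sqrt 3 / 2) * I)
        + (1/2 - (Real.sqrt 3 / 2) * I) = 2 by ring]
  norm_num

lemma e20 : honeycombEig 2 0 = 0 := by
  rw [eig_eq, show ((2:ZMod 6)).val = 2 from rfl,
      show ((-(2:ZMod 6) + 3 * ((0:ZMod 2).val : ZMod 6)).val) = 4 from rfl,
      z2, z4, show (1:ℂ) + (-1/2 + (Real.sqrt 3 / 2) * I)
        + (-1/2 - (Real.sqrt 3 / 2) * I) = 0 by ring]
  norm_num

lemma e30 : honeycombEig 3 0 = 1 := by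
  rw [eig_eq, show ((3:ZMod 6)).val = 3 from rfl,
      show ((-(3:ZMod 6) + 3 * ((0:ZMod 2).val : ZMod 6)).val) = 3 from rfl,
      z3, show (1:ℂ) + -1 + -1 = -1 by ring]
  norm_num

lemma e40 : honeycombEig 4 0 = 0 := by
  rw [eig_eq, show ((4:ZMod 6)).val = 4 from rfl,
      show ((-(4:ZMod 6) + 3 * ((0:ZMod 2).val : ZMod 6)).val) = 2 from rfl,
      z2, z4, show (1:ℂ) + (-1/2 - (Real.sqrt 3 / 2) * I)
        + (-1/2 + (Real.sqrt 3 / 2) * I) = 0 by ring]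
  norm_num

lemma e50 : honeycombEig 5 0 = 2 := by
  rw [eig_eq, show ((5:ZMod 6)).val = 5 from rfl,
      show ((-(5:ZMod 6) + 3 * ((0:ZMod 2).val : ZMod 6)).val) = 1 from rfl,
      z5, pow_one, z1, show (1:ℂ) + (1/2 - (Real.sqrt 3 / 2) * I)
        + (1/2 + (Real.sqrt 3 / 2) * I) = 2 by ring]
  norm_num

lemma e01 : honeycombEig 0 1 = 1 := by
  rw [eig_eq, show ((0:ZMod 6)).val = 0 from rfl,
      show ((-(0:ZMod 6) + 3 * ((1:ZMod 2).val : ZMod 6)).val) = 3 from rfl,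
      z3, pow_zero, show (1:ℂ) + 1 + -1 = 1 by ring]
  norm_num

lemma e11 : honeycombEig 1 1 = 2 := by
  rw [eig_eq, show ((1:ZMod 6)).val = 1 from rfl,
      show ((-(1:ZMod 6) + 3 * ((1:ZMod 2).val : ZMod 6)).val) = 2 from rfl,
      z2, pow_one, z1, show (1:ℂ) + (1/2 + (Real.sqrt 3 / 2) * I)
        + (-1/2 + (Real.sqrt 3 / 2) * I) = ((1:ℝ):ℂ) + (Real.sqrt 3 : ℝ) * I by
          push_cast; ring]
  exact abs2pos

lemma e21 : honeycombEig 2 1 = 2 := by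
  rw [eig_eq, show ((2:ZMod 6)).val = 2 from rfl,
      show ((-(2:ZMod 6) + 3 * ((1:ZMod 2).val : ZMod 6)).val) = 1 from rfl,
      z2, pow_one, z1, show (1:ℂ) + (-1/2 + (Real.sqrt 3 / 2) * I)
        + (1/2 + (Real.sqrt 3 / 2) * I) = ((1:ℝ):ℂ) + (Real.sqrt 3 : ℝ) * I by
          push_cast; ring]
  exact abs2pos

lemma e31 : honeycombEig 3 1 = 1 := by
  rw [eig_eq, show ((3:ZMod 6)).val = 3 from rfl,
      show ((-(3:ZMod 6) + 3 * ((1:ZMod 2).val : ZMod 6)).val) = 0 from rfl,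
      z3, show (1:ℂ) + -1 + ζ^0 = 1 by rw [pow_zero]; ring]
  norm_num

lemma e41 : honeycombEig 4 1 = 2 := by
  rw [eig_eq, show ((4:ZMod 6)).val = 4 from rfl,
      show ((-(4:ZMod 6) + 3 * ((1:ZMod 2).val : ZMod 6)).val) = 5 from rfl,
      z4, z5, show (1:ℂ) + (-1/2 - (Real.sqrt 3 / 2) * I)
        + (1/2 - (Real.sqrt 3 / 2) * I) = ((1:ℝ):ℂ) + ((-Real.sqrt 3 : ℝ):ℂ) * I by
          push_cast; ring]
  exact abs2neg

lemma e51 : honeycombEig 5 1 = 2 := by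
  rw [eig_eq, show ((5:ZMod 6)).val = 5 from rfl,
      show ((-(5:ZMod 6) + 3 * ((1:ZMod 2).val : ZMod 6)).val) = 4 from rfl,
      z4, z5, show (1:ℂ) + (1/2 - (Real.sqrt 3 / 2) * I)
        + (-1/2 - (Real.sqrt 3 / 2) * I) = ((1:ℝ):ℂ) + ((-Real.sqrt 3 : ℝ):ℂ) * I by
          push_cast; ring]
  exact abs2neg

lemma huniv : (Finset.univ : Finset (ZMod 6 × ZMod 2)).val
    = (↑[((0:ZMod 6),(0:ZMod 2)),(1,0),(5,0),(1,1),(2,1),(4,1),(5,1),(0,1),(3,0),(3,1),(2,0),(4,0)] : Multiset (ZMod 6 × ZMod 2)) := by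
  decide

lemma spec_eq : honeycombSpectrum
    = Multiset.map (Int.cast : ℤ → ℝ)
        (↑([3,2,2,2,2,2,2,1,1,1,0,0] ++ [-3,-2,-2,-2,-2,-2,-2,-1,-1,-1,0,0] : List ℤ)) := by
  rw [honeycombSpectrum, huniv]
  simp [e00,e10,e20,e30,e40,e50,e01,e11,e21,e31,e41,e51]


/-- The multiset `{±|1 + e^{2πki/6} + e^{2π(−k+3l)i/6}|}` consists of integers, and equals
`{3,−3,2,2,2,2,2,2,−2,−2,−2,−2,−2,−2,1,1,1,−1,−1,−1,0,0,0,0}`. -/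
theorem honeycombSpectrum_integral :
    (∀ x ∈ honeycombSpectrum, ∃ m : ℤ, x = (m : ℝ)) ∧
    honeycombSpectrum =
      ({3, -3, 2, 2, 2, 2, 2, 2, -2, -2, -2, -2, -2, -2,
        1, 1, 1, -1, -1, -1, 0, 0, 0, 0} : Multiset ℝ) := by

  have h2 : honeycombSpectrum =
      ({3, -3, 2, 2, 2, 2, 2, 2, -2, -2, -2, -2, -2, -2,
        1, 1, 1, -1, -1, -1, 0, 0, 0, 0} : Multiset ℝ) := by
    rw [spec_eq, show (↑([3,2,2,2,2,2,2,1,1,1,0,0] ++ [-3,-2,-2,-2,-2,-2,-2,-1,-1,-1,0,0] : List ℤ) : Multiset ℤ)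
        = ({3, -3, 2, 2, 2, 2, 2, 2, -2, -2, -2, -2, -2, -2,
        1, 1, 1, -1, -1, -1, 0, 0, 0, 0} : Multiset ℤ) from by decide]
    simp [Multiset.insert_eq_cons]
  refine ⟨fun x hx => ?_, h2⟩
  rw [spec_eq] at hx
  simp only [Multiset.mem_map] at hx
  obtain ⟨m, _, hm⟩ := hx
  exact ⟨m, hm.symm⟩
end
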